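/- Under Assumption (A) with h, σ ∈ C²(Ω̄) (conditions (i)–(iv) and the uniform bound (v) for |α| = 2), the maximizers satisfy |c_n − c| = O(n^{-p}) as n → ∞. -/

import Mathlib

open Filter Asymptotics Topology Matrix

noncomputable def pd {d : ℕ} (i : Fin d) (f : (Fin d → ℝ) → ℝ) : (Fin d → ℝ) → ℝ :=
  fun x => fderiv ℝ f x (Pi.single i 1)

noncomputable def hess {d : ℕ} (f : (Fin d → ℝ) → ℝ) (x : Fin d → ℝ) :
    Matrix (Fin d) (Fin d) ℝ := Matrix.of fun i j => pd i (pd j f) x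

set_option maxHeartbeats 1000000 in
theorem stmt_2 (d : ℕ) (Ω : Set (Fin d → ℝ)) (hΩo : IsOpen Ω)
    (hΩb : Bornology.IsBounded Ω) (hΩc : IsConnected Ω)
    (h σ : (Fin d → ℝ) → ℝ)
    (hh : ContDiffOn ℝ 2 h (closure Ω)) (hσ : ContDiffOn ℝ 2 σ (closure Ω))
    (p : ℝ) (hp : 1 < p) (ε : ℕ → ℝ) (hεpos : ∀ n, 0 < ε n)
    (hε : ε =O[atTop] fun n : ℕ => (n : ℝ) ^ (-p))
    (hn : ℕ → (Fin d → ℝ) → ℝ) (hhn : ∀ n x, hn n x = h x + ε n * σ x)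
    (c : Fin d → ℝ) (hc : c ∈ Ω) (hmax : ∀ x ∈ closure Ω, x ≠ c → h x < h c)
    (hdet : (hess h c).det ≠ 0)
    (cn : ℕ → Fin d → ℝ) (hcnΩ : ∀ n, cn n ∈ Ω)
    (hmaxn : ∀ n, ∀ x ∈ closure Ω, x ≠ cn n → hn n x < hn n (cn n))
    (hdetn : ∀ n, (hess (hn n) (cn n)).det ≠ 0)
    (hinf : ∃ N₀ : ℕ, ∃ C > (0 : ℝ), ∀ n ≥ N₀, ∀ x ∈ closure Ω, C ≤ |(hess (hn n) x).det|)
    (hsup : ∃ N₁ : ℕ, ∃ M : ℝ, ∀ n ≥ N₁, ∀ x ∈ closure Ω, ∀ i j, |hess (hn n) x i j| ≤ M) :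
    (fun n : ℕ => ‖cn n - c‖) =O[atTop] fun n : ℕ => (n : ℝ) ^ (-p) := by
  classical
  have hΩsub : Ω ⊆ closure Ω := subset_closure
  have hcomp : IsCompact (closure Ω) := hΩb.isCompact_closure
  -- differentiability on Ω
  have hhat : ∀ x ∈ Ω, ContDiffAt ℝ 2 h x := fun x hx =>
    hh.contDiffAt (mem_of_superset (hΩo.mem_nhds hx) hΩsub)
  have hσat : ∀ x ∈ Ω, ContDiffAt ℝ 2 σ x := fun x hx =>
    hσ.contDiffAt (mem_of_superset (hΩo.mem_nhds hx) hΩsub)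
  have hdiffh : ∀ x ∈ Ω, DifferentiableAt ℝ h x := fun x hx =>
    (hhat x hx).differentiableAt (by norm_num)
  have hdiffσ : ∀ x ∈ Ω, DifferentiableAt ℝ σ x := fun x hx =>
    (hσat x hx).differentiableAt (by norm_num)
  -- ε tends to 0
  have hε0 : Tendsto ε atTop (𝓝 0) := by
    have h1 : Tendsto (fun n : ℕ => (n : ℝ) ^ (-p)) atTop (𝓝 0) :=
      (tendsto_rpow_neg_atTop (by linarith)).comp tendsto_natCast_atTop_atTop
    exact hε.trans_tendsto h1
  -- bound on σ
  obtain ⟨S, hSb⟩ : ∃ S, ∀ x ∈ closure Ω, ‖σ x‖ ≤ S :=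
    hcomp.exists_bound_of_continuousOn hσ.continuousOn
  have hS0 : 0 ≤ S := le_trans (norm_nonneg _) (hSb c (hΩsub hc))
  -- convergence cn → c
  have hconv : Tendsto cn atTop (𝓝 c) := by
    rw [Metric.tendsto_nhds]
    intro δ hδ
    by_cases hK : (closure Ω \ Metric.ball c δ).Nonempty
    · obtain ⟨x₀, hx₀K, hx₀max⟩ :=
        (hcomp.diff Metric.isOpen_ball).exists_isMaxOn hK
          (hh.continuousOn.mono Set.diff_subset)
      have hx₀ne : x₀ ≠ c := by
        intro e; exact hx₀K.2 (e ▸ Metric.mem_ball_self hδ)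
      have hlt : h x₀ < h c := hmax x₀ hx₀K.1 hx₀ne
      have hev : ∀ᶠ n in atTop, ε n < (h c - h x₀) / (2 * S + 1) :=
        hε0.eventually_lt_const (div_pos (by linarith) (by positivity))
      filter_upwards [hev] with n hεn
      by_contra hball
      have hcnK : cn n ∈ closure Ω \ Metric.ball c δ :=
        ⟨hΩsub (hcnΩ n), by simpa [Metric.mem_ball] using hball⟩
      have h1 : hn n c ≤ hn n (cn n) := by
        rcases eq_or_ne c (cn n) with e | e
        · rw [e]
        · exact (hmaxn n c (hΩsub hc) e).le
      have h2 : h (cn n) ≤ h x₀ := hx₀max hcnK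
      rw [hhn, hhn] at h1
      have b1 : |σ c| ≤ S := by rw [← Real.norm_eq_abs]; exact hSb c (hΩsub hc)
      have b2 : |σ (cn n)| ≤ S := by
        rw [← Real.norm_eq_abs]; exact hSb _ (hΩsub (hcnΩ n))
      have b1' := abs_le.mp b1
      have b2' := abs_le.mp b2
      have hεn' : ε n * (2 * S + 1) < h c - h x₀ := by
        rw [← lt_div_iff₀ (by positivity)]; exact hεn
      nlinarith [hεpos n]
    · rw [Set.not_nonempty_iff_eq_empty] at hK
      filter_upwards with n
      have : cn n ∈ Metric.ball c δ := by
        by_contra hb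
        exact (Set.eq_empty_iff_forall_notMem.mp hK (cn n)) ⟨hΩsub (hcnΩ n), hb⟩
      simpa [Metric.mem_ball] using this
  -- critical points
  have hFc : fderiv ℝ h c = 0 := by
    apply IsLocalMax.fderiv_eq_zero
    filter_upwards [hΩo.mem_nhds hc] with x hx
    rcases eq_or_ne x c with e | e
    · rw [e]
    · exact (hmax x (hΩsub hx) e).le
  have hFn : ∀ n, fderiv ℝ h (cn n) = (-(ε n)) • fderiv ℝ σ (cn n) := by
    intro n
    have hloc : IsLocalMax (hn n) (cn n) := by
      filter_upwards [hΩo.mem_nhds (hcnΩ n)] with x hx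
      rcases eq_or_ne x (cn n) with e | e
      · rw [e]
      · exact (hmaxn n x (hΩsub hx) e).le
    have h0 := hloc.fderiv_eq_zero
    have heq : hn n = fun x => h x + ε n * σ x := funext (hhn n)
    rw [heq] at h0
    rw [fderiv_fun_add (hdiffh _ (hcnΩ n)) ((hdiffσ _ (hcnΩ n)).const_mul _),
      fderiv_const_mul (hdiffσ _ (hcnΩ n))] at h0
    have := eq_neg_of_add_eq_zero_left h0
    rw [this]; exact (neg_smul (ε n) _).symm
  -- ball inside Ω and bound on fderiv σ
  obtain ⟨δ₁, hδ₁pos, hδ₁sub⟩ := Metric.isOpen_iff.mp hΩo c hc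
  set δ₀ := δ₁ / 2 with hδ₀def
  have hδ₀pos : 0 < δ₀ := by positivity
  have hδ₀sub : Metric.closedBall c δ₀ ⊆ Ω :=
    (Metric.closedBall_subset_ball (by simp [hδ₀def]; linarith)).trans hδ₁sub
  have hσf : ContinuousOn (fderiv ℝ σ) Ω :=
    (hσ.mono hΩsub).continuousOn_fderiv_of_isOpen hΩo one_le_two
  obtain ⟨M, hM⟩ : ∃ M, ∀ x ∈ Metric.closedBall c δ₀, ‖fderiv ℝ σ x‖ ≤ M :=
    (isCompact_closedBall c δ₀).exists_bound_of_continuousOn (hσf.mono hδ₀sub)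
  have hM0 : 0 ≤ M :=
    le_trans (norm_nonneg _) (hM c (Metric.mem_closedBall_self hδ₀pos.le))
  -- second derivative
  have hhc2 : ContDiffAt ℝ 2 h c := hhat c hc
  have hF1 : ContDiffAt ℝ 1 (fderiv ℝ h) c := hhc2.fderiv_right (by norm_num)
  have hFd : DifferentiableAt ℝ (fderiv ℝ h) c := hF1.differentiableAt (by norm_num)
  set L := fderiv ℝ (fderiv ℝ h) c with hLdef
  have hL : HasFDerivAt (fderiv ℝ h) L c := hFd.hasFDerivAt
  have hessL : ∀ i j, hess h c i j = L (Pi.single i 1) (Pi.single j 1) := by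
    intro i j
    set A : ((Fin d → ℝ) →L[ℝ] ℝ) →L[ℝ] ℝ :=
      ContinuousLinearMap.apply ℝ ℝ (Pi.single j 1) with hAdef
    have hev : HasFDerivAt (⇑A ∘ fderiv ℝ h) (A.comp L) c :=
      A.hasFDerivAt.comp c hL
    have hfun : pd j h = ⇑A ∘ fderiv ℝ h := by
      funext x; simp [pd, hAdef, Function.comp]
    show pd i (pd j h) c = _
    rw [hfun]
    unfold pd
    rw [hev.fderiv]
    simp [hAdef]
  -- the linear map T
  set T : (Fin d → ℝ) →ₗ[ℝ] (Fin d → ℝ) :=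
    { toFun := fun v j => L v (Pi.single j 1)
      map_add' := by intro x y; funext j; simp
      map_smul' := by intro m x; funext j; simp } with hTdef
  have hTmat : LinearMap.toMatrix' T = (hess h c).transpose := by
    ext i j
    rw [LinearMap.toMatrix'_apply]
    have : (fun j' => if j' = j then (1:ℝ) else 0) = Pi.single j 1 := by
      funext l; rw [Pi.single_apply]
    show L (Pi.single j 1) (Pi.single i 1) = (hess h c).transpose i j
    rw [Matrix.transpose_apply, hessL]
  have hdetA : (LinearMap.toMatrix' T).det ≠ 0 := by
    rw [hTmat, Matrix.det_transpose]; exact hdet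
  have hker : LinearMap.ker T = ⊥ := by
    rw [LinearMap.ker_eq_bot]
    intro v w hvw
    have h1 : LinearMap.toMatrix' T *ᵥ v = LinearMap.toMatrix' T *ᵥ w := by
      rw [← Matrix.toLin'_apply, ← Matrix.toLin'_apply, Matrix.toLin'_toMatrix']
      exact hvw
    have h2 := congrArg (fun u => (LinearMap.toMatrix' T)⁻¹ *ᵥ u) h1
    simpa [Matrix.mulVec_mulVec, -LinearMap.toMatrix'_mulVec,
      Matrix.nonsing_inv_mul _ (isUnit_iff_ne_zero.mpr hdetA)] using h2
  obtain ⟨K, hKpos, hKanti⟩ := T.exists_antilipschitzWith hker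
  have hKle : ∀ v, ‖v‖ ≤ (K : ℝ) * ‖T v‖ := by
    intro v
    have := hKanti.le_mul_dist v 0
    simpa [dist_eq_norm, map_zero] using this
  have hTle : ∀ v, ‖T v‖ ≤ ‖L v‖ := by
    intro v
    rw [pi_norm_le_iff_of_nonneg (norm_nonneg _)]
    intro j
    calc ‖L v (Pi.single j 1)‖ ≤ ‖L v‖ * ‖(Pi.single j 1 : Fin d → ℝ)‖ :=
          (L v).le_opNorm _
      _ ≤ ‖L v‖ * 1 := by
          gcongr
          rw [Pi.norm_single]; simp
      _ = ‖L v‖ := mul_one _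
  set Kr := (K : ℝ) with hKrdef
  have hKr0 : 0 ≤ Kr := K.coe_nonneg
  set ρ := 1 / (2 * (Kr + 1)) with hρdef
  have hρpos : 0 < ρ := by positivity
  have hlo := hL.isLittleO.def hρpos
  have hev2 : ∀ᶠ x in 𝓝 c, ‖fderiv ℝ h x - L (x - c)‖ ≤ ρ * ‖x - c‖ := by
    filter_upwards [hlo] with x hx
    simpa [hFc] using hx
  -- conclude
  have key : (fun n : ℕ => ‖cn n - c‖) =O[atTop] ε := by
    rw [isBigO_iff]
    refine ⟨2 * Kr * M, ?_⟩
    have hnb : ∀ᶠ n in atTop, cn n ∈ Metric.closedBall c δ₀ :=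
      hconv.eventually (Metric.closedBall_mem_nhds c hδ₀pos)
    have hnb2 : ∀ᶠ n in atTop,
        ‖fderiv ℝ h (cn n) - L (cn n - c)‖ ≤ ρ * ‖cn n - c‖ := hconv.eventually hev2
    filter_upwards [hnb, hnb2] with n h1 h2
    have e1 : ‖fderiv ℝ h (cn n)‖ ≤ ε n * M := by
      rw [hFn n, norm_smul]
      simp only [norm_neg, Real.norm_eq_abs, abs_of_pos (hεpos n)]
      exact mul_le_mul_of_nonneg_left (hM _ h1) (hεpos n).le
    have e2 : ‖cn n - c‖ ≤ Kr * ‖T (cn n - c)‖ := hKle _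
    have e3 : ‖T (cn n - c)‖ ≤ ‖L (cn n - c)‖ := hTle _
    have e4 : ‖L (cn n - c)‖ ≤ ‖fderiv ℝ h (cn n)‖ + ρ * ‖cn n - c‖ := by
      calc ‖L (cn n - c)‖
          = ‖fderiv ℝ h (cn n) - (fderiv ℝ h (cn n) - L (cn n - c))‖ := by
            congr 1; abel
        _ ≤ ‖fderiv ℝ h (cn n)‖ + ‖fderiv ℝ h (cn n) - L (cn n - c)‖ :=
            norm_sub_le _ _
        _ ≤ ‖fderiv ℝ h (cn n)‖ + ρ * ‖cn n - c‖ := by linarith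
    have hnn : 0 ≤ ‖cn n - c‖ := norm_nonneg _
    have h5 : Kr * ρ ≤ 1 / 2 := by
      rw [hρdef, mul_one_div, div_le_div_iff₀ (by positivity) (by norm_num)]
      linarith
    have e6 : ‖T (cn n - c)‖ ≤ ε n * M + ρ * ‖cn n - c‖ := by linarith
    have e5 : ‖cn n - c‖ ≤ Kr * (ε n * M + ρ * ‖cn n - c‖) :=
      e2.trans (mul_le_mul_of_nonneg_left e6 hKr0)
    rw [mul_add] at e5
    have e7 : Kr * (ρ * ‖cn n - c‖) ≤ 1 / 2 * ‖cn n - c‖ := by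
      calc Kr * (ρ * ‖cn n - c‖) = Kr * ρ * ‖cn n - c‖ := by ring
        _ ≤ 1 / 2 * ‖cn n - c‖ := mul_le_mul_of_nonneg_right h5 hnn
    have e8 : Kr * (ε n * M) * 2 = 2 * Kr * M * ε n := by ring
    rw [Real.norm_eq_abs, abs_norm, Real.norm_eq_abs, abs_of_pos (hεpos n)]
    linarith
  exact key.trans hε
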